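/- Let q(x) = x^g + a_{g−1}x^{g−1} + … + a_1x + a_0 ∈ ℤ[x] be irreducible of degree g ≥ 1 with |a_{g−1}| > 2g. Then: (i) sym(q) is symplectically irreducible; (ii) sym(q) has a complex root that is not a root of unity; and (iii) sym(q) is not a polynomial in x^k for any integer k > 1. -/

import Mathlib

open Polynomial

/-- For a polynomial `q = a_g x^g + … + a_0` of degree `g`,
`sym(q) = ∑ a_i x^{g-i} (x²+1)^i`, i.e. `sym(q)(x) = x^g · q(x + 1/x)`. -/
noncomputable def symPoly (q : Polynomial ℤ) : Polynomial ℤ :=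
  ∑ i ∈ Finset.range (q.natDegree + 1),
    Polynomial.C (q.coeff i) * Polynomial.X ^ (q.natDegree - i) * (Polynomial.X ^ 2 + 1) ^ i

lemma Xsq_monic : (X ^ 2 + 1 : ℤ[X]).Monic := by
  apply monic_X_pow_add
  exact degree_one_le.trans_lt (by norm_num)

lemma Xsq_natDegree : (X ^ 2 + 1 : ℤ[X]).natDegree = 2 := by
  have : (X ^ 2 + 1 : ℤ[X]) = X ^ 2 + C 1 := by simp
  rw [this, natDegree_X_pow_add_C]

lemma term_natDegree_le (c : ℤ) (k i : ℕ) :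
    (C c * X ^ k * (X ^ 2 + 1) ^ i : ℤ[X]).natDegree ≤ k + 2 * i := by
  refine natDegree_mul_le.trans ?_
  have h1 : (C c * X ^ k : ℤ[X]).natDegree ≤ k :=
    natDegree_mul_le.trans (by simp)
  have h2 : ((X ^ 2 + 1 : ℤ[X]) ^ i).natDegree ≤ 2 * i := by
    refine natDegree_pow_le.trans ?_
    rw [Xsq_natDegree]; ring_nf; omega
  omega

lemma symPoly_natDegree_le (q : ℤ[X]) : (symPoly q).natDegree ≤ 2 * q.natDegree := by
  refine natDegree_sum_le_of_forall_le _ _ fun i hi => ?_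
  simp only [Finset.mem_range] at hi
  exact (term_natDegree_le _ _ _).trans (by omega)

lemma symPoly_coeff_top (q : ℤ[X]) :
    (symPoly q).coeff (2 * q.natDegree) = q.leadingCoeff := by
  set g := q.natDegree with hg
  rw [symPoly, finset_sum_coeff, Finset.sum_range_succ]
  have h0 : ∀ i ∈ Finset.range g,
      (C (q.coeff i) * X ^ (g - i) * (X ^ 2 + 1) ^ i : ℤ[X]).coeff (2 * g) = 0 := by
    intro i hi
    simp only [Finset.mem_range] at hi
    apply coeff_eq_zero_of_natDegree_lt
    exact (term_natDegree_le _ _ _).trans_lt (by omega)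
  rw [Finset.sum_eq_zero h0, zero_add]
  have hm : ((X ^ 2 + 1 : ℤ[X]) ^ g).Monic := Xsq_monic.pow g
  have hd : ((X ^ 2 + 1 : ℤ[X]) ^ g).natDegree = 2 * g := by
    rw [Xsq_monic.natDegree_pow, Xsq_natDegree]; ring
  simp only [Nat.sub_self, pow_zero, mul_one]
  rw [coeff_C_mul]
  have := hm.coeff_natDegree
  rw [hd] at this
  rw [this, mul_one, leadingCoeff]

lemma symPoly_natDegree (q : ℤ[X]) (hq : q ≠ 0) :
    (symPoly q).natDegree = 2 * q.natDegree := by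
  have h1 := symPoly_natDegree_le q
  have h2 : (symPoly q).coeff (2 * q.natDegree) ≠ 0 := by
    rw [symPoly_coeff_top]; exact leadingCoeff_ne_zero.mpr hq
  by_contra h
  exact h2 (coeff_eq_zero_of_natDegree_lt (lt_of_le_of_ne h1 h))

lemma symPoly_ne_zero (q : ℤ[X]) (hq : q ≠ 0) : symPoly q ≠ 0 := by
  intro h
  have := symPoly_coeff_top q
  rw [h, coeff_zero] at this
  exact leadingCoeff_ne_zero.mpr hq this.symm

lemma symPoly_monic (q : ℤ[X]) (hq : q.Monic) : (symPoly q).Monic := by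
  have h := symPoly_natDegree q hq.ne_zero
  unfold Monic leadingCoeff
  rw [h, symPoly_coeff_top]
  exact hq

lemma reflect_Xsq_pow (i : ℕ) :
    reflect (2 * i) ((X ^ 2 + 1 : ℤ[X]) ^ i) = (X ^ 2 + 1) ^ i := by
  induction i with
  | zero => simp
  | succ n ih =>
    have : (2 : ℕ) * (n + 1) = 2 + 2 * n := by ring
    rw [this, pow_succ, mul_comm ((X ^ 2 + 1 : ℤ[X]) ^ n), reflect_mul _ _ (by rw [Xsq_natDegree]) (natDegree_pow_le.trans (by rw [Xsq_natDegree]; ring_nf; omega)), ih]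
    have h2 : reflect 2 (X ^ 2 + 1 : ℤ[X]) = X ^ 2 + 1 := by
      have : (X ^ 2 + 1 : ℤ[X]) = C 1 * X ^ 2 + C 1 * X ^ 0 := by simp
      rw [this, reflect_add, reflect_C_mul_X_pow, reflect_C_mul_X_pow]
      simp [revAt_le]
      ring
    rw [h2, mul_comm]

lemma reflect_sum {ι : Type*} (N : ℕ) (s : Finset ι) (f : ι → ℤ[X]) :
    reflect N (∑ i ∈ s, f i) = ∑ i ∈ s, reflect N (f i) := by
  induction s using Finset.cons_induction with
  | empty => simp
  | cons a s h ih => rw [Finset.sum_cons, Finset.sum_cons, reflect_add, ih]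

lemma reflect_symPoly (q : ℤ[X]) : reflect (2 * q.natDegree) (symPoly q) = symPoly q := by
  set g := q.natDegree with hg
  rw [symPoly, reflect_sum]
  refine Finset.sum_congr rfl fun i hi => ?_
  simp only [Finset.mem_range] at hi
  have hig : i ≤ g := by omega
  have hsplit : 2 * g = 2 * (g - i) + 2 * i := by omega
  rw [hsplit, reflect_mul _ _ (show (C (q.coeff i) * X ^ (g - i)).natDegree ≤ 2 * (g - i) from natDegree_mul_le.trans (by simp; omega)) (natDegree_pow_le.trans (by rw [Xsq_natDegree]; ring_nf; omega)), reflect_Xsq_pow]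
  rw [reflect_C_mul_X_pow, revAt_le (by omega)]
  congr 3
  omega

lemma symPoly_palindromic (q : ℤ[X]) (hq : q ≠ 0) :
    ∀ i ≤ (symPoly q).natDegree,
      (symPoly q).coeff i = (symPoly q).coeff ((symPoly q).natDegree - i) := by
  intro i hi
  rw [symPoly_natDegree q hq] at hi ⊢
  conv_lhs => rw [← reflect_symPoly q]
  rw [coeff_reflect, revAt_le hi]

noncomputable def uu : LaurentPolynomial ℤ := LaurentPolynomial.T 1 + LaurentPolynomial.T (-1)

lemma uu_aeval (q : ℤ[X]) :
    (Polynomial.aeval uu q : LaurentPolynomial ℤ)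
      = ∑ i ∈ Finset.range (q.natDegree + 1), LaurentPolynomial.C (q.coeff i) * uu ^ i := by
  rw [Polynomial.aeval_eq_sum_range]
  refine Finset.sum_congr rfl fun i _ => ?_
  rw [zsmul_eq_mul, eq_intCast LaurentPolynomial.C]

lemma T_mul_uu (i : ℕ) :
    (LaurentPolynomial.T i * uu ^ i : LaurentPolynomial ℤ)
      = (LaurentPolynomial.T 2 + 1) ^ i := by
  have h1 : (LaurentPolynomial.T 1 * uu : LaurentPolynomial ℤ)
      = LaurentPolynomial.T 2 + 1 := by
    rw [uu, mul_add, ← LaurentPolynomial.T_add, ← LaurentPolynomial.T_add]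
    norm_num
  calc (LaurentPolynomial.T i * uu ^ i : LaurentPolynomial ℤ)
      = (LaurentPolynomial.T 1 * uu) ^ i := by
        rw [mul_pow, LaurentPolynomial.T_pow, mul_one]
    _ = (LaurentPolynomial.T 2 + 1) ^ i := by rw [h1]

lemma toLaurent_symPoly (q : ℤ[X]) :
    Polynomial.toLaurent (symPoly q)
      = LaurentPolynomial.T (q.natDegree : ℤ) * Polynomial.aeval uu q := by
  rw [symPoly, map_sum, uu_aeval, Finset.mul_sum]
  refine Finset.sum_congr rfl fun i hi => ?_
  simp only [Finset.mem_range] at hi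
  have hig : i ≤ q.natDegree := by omega
  rw [_root_.map_mul, _root_.map_mul, Polynomial.toLaurent_C, Polynomial.toLaurent_X_pow,
    map_pow, map_add, Polynomial.toLaurent_X_pow, map_one]
  push_cast
  rw [← T_mul_uu]
  rw [show (LaurentPolynomial.C (q.coeff i) * LaurentPolynomial.T ((q.natDegree - i : ℕ) : ℤ) *
      (LaurentPolynomial.T (i : ℤ) * uu ^ i) : LaurentPolynomial ℤ)
      = (LaurentPolynomial.T ((q.natDegree - i : ℕ) : ℤ) * LaurentPolynomial.T (i : ℤ)) *
        (LaurentPolynomial.C (q.coeff i) * uu ^ i) from by ring]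
  rw [← LaurentPolynomial.T_add]
  congr 2
  omega

lemma aeval_uu_eq_zero {s : ℤ[X]} (h : Polynomial.aeval uu s = 0) : s = 0 := by
  by_contra hs
  have := toLaurent_symPoly s
  rw [h, mul_zero] at this
  exact symPoly_ne_zero s hs (Polynomial.toLaurent_injective (by simpa using this))

lemma aeval_uu_injective {s t : ℤ[X]} (h : Polynomial.aeval uu s = Polynomial.aeval uu t) :
    s = t := by
  have : Polynomial.aeval uu (s - t) = 0 := by rw [map_sub, h, sub_self]
  exact sub_eq_zero.mp (aeval_uu_eq_zero this)

lemma symPoly_mul (r s : ℤ[X]) (hr : r ≠ 0) (hs : s ≠ 0) :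
    symPoly (r * s) = symPoly r * symPoly s := by
  apply Polynomial.toLaurent_injective
  rw [map_mul, toLaurent_symPoly, toLaurent_symPoly, toLaurent_symPoly,
    Polynomial.natDegree_mul hr hs, map_mul]
  push_cast
  rw [LaurentPolynomial.T_add]
  ring

noncomputable def chebV : ℕ → ℤ[X]
  | 0 => 2
  | 1 => X
  | (n + 2) => X * chebV (n + 1) - chebV n

lemma chebV_spec (n : ℕ) :
    (chebV n).natDegree ≤ n ∧ (1 ≤ n → (chebV n).Monic ∧ (chebV n).natDegree = n) := by
  induction n using Nat.twoStepInduction with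
  | zero =>
    refine ⟨?_, by omega⟩
    show (2 : ℤ[X]).natDegree ≤ 0
    simp
  | one => refine ⟨?_, fun _ => ⟨?_, ?_⟩⟩ <;> simp [chebV, monic_X]
  | more n ih1 ih2 =>
    obtain ⟨hm, hd⟩ := ih2.2 (by omega)
    have hmul : (X * chebV (n + 1)).Monic := monic_X.mul hm
    have hdmul : (X * chebV (n + 1)).natDegree = n + 2 := by
      rw [(monic_X (R := ℤ)).natDegree_mul hm, natDegree_X, hd]; omega
    have hn := ih1.1
    have hlt : (chebV n).degree < (X * chebV (n + 1)).degree := by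
      rw [degree_eq_natDegree hmul.ne_zero, hdmul]
      exact lt_of_le_of_lt degree_le_natDegree (Nat.cast_lt.mpr (by omega))
    have heq : chebV (n + 2) = X * chebV (n + 1) - chebV n := rfl
    have hdeg : (chebV (n + 2)).degree = ((n + 2 : ℕ) : WithBot ℕ) := by
      rw [heq, degree_sub_eq_left_of_degree_lt hlt, degree_eq_natDegree hmul.ne_zero, hdmul]
    have hnd : (chebV (n + 2)).natDegree = n + 2 := natDegree_eq_of_degree_eq_some hdeg
    exact ⟨le_of_eq hnd, fun _ => ⟨heq ▸ hmul.sub_of_left hlt, hnd⟩⟩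

lemma chebV_aeval (n : ℕ) :
    Polynomial.aeval uu (chebV n)
      = LaurentPolynomial.T (n : ℤ) + LaurentPolynomial.T (-(n : ℤ)) := by
  induction n using Nat.twoStepInduction with
  | zero =>
    show Polynomial.aeval uu (2 : ℤ[X]) = _
    simp [LaurentPolynomial.T_zero]
    rw [map_ofNat (Polynomial.aeval uu : ℤ[X] →ₐ[ℤ] LaurentPolynomial ℤ) 2]
    norm_num
  | one =>
    show Polynomial.aeval uu (X : ℤ[X]) = _
    simp [uu]
  | more n ih1 ih2 =>
    show Polynomial.aeval uu (X * chebV (n + 1) - chebV n) = _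
    rw [map_sub, map_mul, Polynomial.aeval_X, ih1, ih2]
    rw [uu, add_mul, mul_add, mul_add, ← LaurentPolynomial.T_add, ← LaurentPolynomial.T_add,
      ← LaurentPolynomial.T_add, ← LaurentPolynomial.T_add]
    push_cast
    ring_nf

lemma Cint (a : ℤ) : LaurentPolynomial.C a = (a : LaurentPolynomial ℤ) :=
  eq_intCast LaurentPolynomial.C a

lemma toLaurent_as_sum (p : ℤ[X]) :
    Polynomial.toLaurent p
      = ∑ i ∈ Finset.range (p.natDegree + 1),
          ((p.coeff i : LaurentPolynomial ℤ) * LaurentPolynomial.T (i : ℤ)) := by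
  conv_lhs => rw [p.as_sum_range, map_sum]
  refine Finset.sum_congr rfl fun i _ => ?_
  rw [Polynomial.toLaurent_C_mul_T, Cint]

lemma exists_symPoly (p : ℤ[X]) (hmon : p.Monic) (n : ℕ) (hn : 1 ≤ n)
    (hdeg : p.natDegree = 2 * n)
    (hpal : ∀ i ≤ p.natDegree, p.coeff i = p.coeff (p.natDegree - i)) :
    ∃ r : ℤ[X], r.Monic ∧ r.natDegree = n ∧ symPoly r = p := by
  set c : ℕ → ℤ := fun i => p.coeff i with hc
  set r : ℤ[X] :=
    (∑ j ∈ Finset.range n, C (c (n + j + 1)) * chebV (j + 1)) + C (c n) with hr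
  -- split off the top term of the sum
  have htop : c (n + (n - 1) + 1) = 1 := by
    have : n + (n - 1) + 1 = 2 * n := by omega
    rw [hc]
    simp only [this, ← hdeg]
    exact hmon.coeff_natDegree
  have hrsplit : r = chebV n +
      ((∑ j ∈ Finset.range (n - 1), C (c (n + j + 1)) * chebV (j + 1)) + C (c n)) := by
    rw [hr]
    have h1 : n = (n - 1) + 1 := by omega
    rw [h1, Finset.sum_range_succ, ← h1, htop]
    rw [map_one, one_mul]
    ring
  have hsle : (((∑ j ∈ Finset.range (n - 1), C (c (n + j + 1)) * chebV (j + 1)) + C (c n)) : ℤ[X]).natDegree ≤ n - 1 := by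
    refine natDegree_add_le_of_degree_le ?_ (by simp)
    refine natDegree_sum_le_of_forall_le _ _ fun j hj => ?_
    simp only [Finset.mem_range] at hj
    refine natDegree_mul_le.trans ?_
    have := (chebV_spec (j + 1)).1
    simp only [natDegree_C]
    omega
  have hVn := (chebV_spec n).2 hn
  have hlt : (((∑ j ∈ Finset.range (n - 1), C (c (n + j + 1)) * chebV (j + 1)) + C (c n)) : ℤ[X]).degree < (chebV n).degree := by
    rw [degree_eq_natDegree hVn.1.ne_zero, hVn.2]
    refine lt_of_le_of_lt degree_le_natDegree (Nat.cast_lt.mpr ?_)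
    omega
  have hrmon : r.Monic := by rw [hrsplit]; exact hVn.1.add_of_left hlt
  have hrdeg : r.natDegree = n := by
    rw [hrsplit]
    have := degree_add_eq_left_of_degree_lt hlt
    have h2 : (chebV n + _).natDegree = (chebV n).natDegree := natDegree_eq_of_degree_eq_some (by rw [this, degree_eq_natDegree hVn.1.ne_zero, hVn.2])
    rw [h2, hVn.2]
  refine ⟨r, hrmon, hrdeg, ?_⟩
  apply Polynomial.toLaurent_injective
  rw [toLaurent_symPoly, hrdeg, toLaurent_as_sum, hdeg]
  -- compute aeval uu r
  have haev : Polynomial.aeval uu r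
      = (∑ j ∈ Finset.range n, (c (n + j + 1) : LaurentPolynomial ℤ) *
          (LaurentPolynomial.T ((j : ℤ) + 1) + LaurentPolynomial.T (-((j : ℤ) + 1))))
        + (c n : LaurentPolynomial ℤ) := by
    rw [hr, map_add, map_sum, Polynomial.aeval_C, eq_intCast (algebraMap ℤ (LaurentPolynomial ℤ))]
    congr 1
    refine Finset.sum_congr rfl fun j _ => ?_
    rw [map_mul, Polynomial.aeval_C, eq_intCast (algebraMap ℤ (LaurentPolynomial ℤ)), chebV_aeval]
    push_cast
    ring
  rw [haev, mul_add, Finset.mul_sum]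
  have hsplitL : ∑ i ∈ Finset.range (2 * n + 1),
      ((c i : LaurentPolynomial ℤ) * LaurentPolynomial.T (i : ℤ))
      = (∑ i ∈ Finset.range n, (c i : LaurentPolynomial ℤ) * LaurentPolynomial.T (i : ℤ))
        + (c n : LaurentPolynomial ℤ) * LaurentPolynomial.T (n : ℤ)
        + ∑ j ∈ Finset.range n,
            (c (n + 1 + j) : LaurentPolynomial ℤ) * LaurentPolynomial.T ((n + 1 + j : ℕ) : ℤ) := by
    rw [show 2 * n + 1 = (n + 1) + n from by omega, Finset.sum_range_add, Finset.sum_range_succ]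
  rw [hsplitL]
  have hlow : (∑ i ∈ Finset.range n, (c i : LaurentPolynomial ℤ) * LaurentPolynomial.T (i : ℤ))
      = ∑ j ∈ Finset.range n, (c (n + j + 1) : LaurentPolynomial ℤ) *
          LaurentPolynomial.T ((n : ℤ) - (j : ℤ) - 1) := by
    rw [← Finset.sum_range_reflect]
    refine Finset.sum_congr rfl fun j hj => ?_
    simp only [Finset.mem_range] at hj
    have hidx : c (n - 1 - j) = c (n + j + 1) := by
      have h1 : n - 1 - j ≤ p.natDegree := by omega
      have h2 := hpal (n - 1 - j) h1
      simp only [hc]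
      rw [h2, hdeg, show 2 * n - (n - 1 - j) = n + j + 1 from by omega]
    rw [hidx, show ((n - 1 - j : ℕ) : ℤ) = (n : ℤ) - (j : ℤ) - 1 from by omega]
  rw [hlow]
  have hterm : ∀ j ∈ Finset.range n,
      LaurentPolynomial.T (n : ℤ) * ((c (n + j + 1) : LaurentPolynomial ℤ) *
        (LaurentPolynomial.T ((j : ℤ) + 1) + LaurentPolynomial.T (-((j : ℤ) + 1))))
      = (c (n + 1 + j) : LaurentPolynomial ℤ) * LaurentPolynomial.T ((n + 1 + j : ℕ) : ℤ)
        + (c (n + j + 1) : LaurentPolynomial ℤ) * LaurentPolynomial.T ((n : ℤ) - (j : ℤ) - 1) := by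
    intro j hj
    have e1 : (LaurentPolynomial.T (n : ℤ) * LaurentPolynomial.T ((j : ℤ) + 1) : LaurentPolynomial ℤ)
        = LaurentPolynomial.T ((n + 1 + j : ℕ) : ℤ) := by
      rw [← LaurentPolynomial.T_add]; congr 1; push_cast; ring
    have e2 : (LaurentPolynomial.T (n : ℤ) * LaurentPolynomial.T (-((j : ℤ) + 1)) : LaurentPolynomial ℤ)
        = LaurentPolynomial.T ((n : ℤ) - (j : ℤ) - 1) := by
      rw [← LaurentPolynomial.T_add]; congr 1; ring
    rw [show n + 1 + j = n + j + 1 from by omega] at e1 ⊢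
    rw [show LaurentPolynomial.T (n : ℤ) * ((c (n + j + 1) : LaurentPolynomial ℤ) *
        (LaurentPolynomial.T ((j : ℤ) + 1) + LaurentPolynomial.T (-((j : ℤ) + 1))))
        = (c (n + j + 1) : LaurentPolynomial ℤ) *
            (LaurentPolynomial.T (n : ℤ) * LaurentPolynomial.T ((j : ℤ) + 1))
          + (c (n + j + 1) : LaurentPolynomial ℤ) *
            (LaurentPolynomial.T (n : ℤ) * LaurentPolynomial.T (-((j : ℤ) + 1))) from by ring]
    rw [e1, e2]
  rw [Finset.sum_congr rfl hterm, Finset.sum_add_distrib]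
  ring

lemma symPoly_injective {a b : ℤ[X]} (ha : a ≠ 0) (hb : b ≠ 0) (h : symPoly a = symPoly b) :
    a = b := by
  have hd : a.natDegree = b.natDegree := by
    have := congrArg natDegree h
    rw [symPoly_natDegree a ha, symPoly_natDegree b hb] at this
    omega
  have h2 := congrArg Polynomial.toLaurent h
  rw [toLaurent_symPoly, toLaurent_symPoly, hd] at h2
  exact aeval_uu_injective ((LaurentPolynomial.isUnit_T _).mul_left_cancel h2)

lemma Xsq_pow_coeff_odd (i m : ℕ) (hm : ¬ 2 ∣ m) : ((X ^ 2 + 1 : ℤ[X]) ^ i).coeff m = 0 := by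
  have h : ((X ^ 2 + 1 : ℤ[X]) ^ i) = Polynomial.expand ℤ 2 ((X + 1) ^ i) := by
    rw [map_pow, map_add, Polynomial.expand_X, map_one]
  rw [h, Polynomial.coeff_expand (by norm_num), if_neg hm]

lemma symPoly_coeff_subtop (q : ℤ[X]) (hg : 1 ≤ q.natDegree) :
    (symPoly q).coeff (2 * q.natDegree - 1) = q.coeff (q.natDegree - 1) := by
  set g := q.natDegree with hgdef
  rw [symPoly, finset_sum_coeff]
  rw [show g + 1 = (g - 1) + 1 + 1 from by omega, Finset.sum_range_succ, Finset.sum_range_succ]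
  have hz : ∀ i ∈ Finset.range (g - 1),
      (C (q.coeff i) * X ^ (g - i) * (X ^ 2 + 1) ^ i).coeff (2 * g - 1) = 0 := by
    intro i hi
    simp only [Finset.mem_range] at hi
    exact coeff_eq_zero_of_natDegree_lt ((term_natDegree_le _ _ _).trans_lt (by omega))
  rw [Finset.sum_eq_zero hz, zero_add]
  rw [show (g - 1) + 1 = g from by omega]
  have h2 : (C (q.coeff g) * X ^ (g - g) * (X ^ 2 + 1) ^ g).coeff (2 * g - 1) = 0 := by
    simp only [Nat.sub_self, pow_zero, mul_one]
    rw [coeff_C_mul, Xsq_pow_coeff_odd g _ (by omega), mul_zero]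
  rw [h2, add_zero]
  rw [show g - (g - 1) = 1 from by omega]
  rw [mul_assoc, coeff_C_mul, pow_one, show 2 * g - 1 = 2 * (g - 1) + 1 from by omega,
    coeff_X_mul]
  have hm : ((X ^ 2 + 1 : ℤ[X]) ^ (g - 1)).coeff (2 * (g - 1)) = 1 := by
    have := (Xsq_monic.pow (g - 1)).coeff_natDegree
    rw [Xsq_monic.natDegree_pow, Xsq_natDegree] at this
    rwa [mul_comm]
  rw [hm, mul_one]

lemma symPoly_aeval_complex (q : ℤ[X]) (ζ α : ℂ) (hζ : ζ ≠ 0)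
    (hzz : ζ ^ 2 + 1 = α * ζ) :
    Polynomial.aeval ζ (symPoly q) = Polynomial.aeval α q * ζ ^ q.natDegree := by
  set g := q.natDegree with hgdef
  rw [symPoly, map_sum, Polynomial.aeval_eq_sum_range, Finset.sum_mul]
  refine Finset.sum_congr rfl fun i hi => ?_
  simp only [Finset.mem_range] at hi
  rw [map_mul, map_mul, Polynomial.aeval_C, map_pow, Polynomial.aeval_X, map_pow, map_add,
    map_pow, Polynomial.aeval_X, map_one, hzz, zsmul_eq_mul]
  rw [algebraMap_int_eq, eq_intCast]
  rw [mul_pow, mul_assoc, mul_assoc]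
  congr 1
  rw [mul_comm, mul_assoc, ← pow_add, show i + (g - i) = g from by omega]

/-- A polynomial is symplectic if it is monic of even degree `2n` (`n ≥ 1`) and palindromic. -/
def IsSymplecticPoly (p : Polynomial ℤ) : Prop :=
  p.Monic ∧ (∃ n : ℕ, 1 ≤ n ∧ p.natDegree = 2 * n) ∧
    ∀ i ≤ p.natDegree, p.coeff i = p.coeff (p.natDegree - i)

/-- A symplectic polynomial is symplectically irreducible if it is not the
product of two symplectic polynomials. -/
def SymplecticallyIrreducible (p : Polynomial ℤ) : Prop :=
  IsSymplecticPoly p ∧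
    ¬ ∃ p₁ p₂ : Polynomial ℤ, IsSymplecticPoly p₁ ∧ IsSymplecticPoly p₂ ∧ p = p₁ * p₂

theorem sym_satisfies_homological_criterion (q : Polynomial ℤ) (g : ℕ) (hg : 1 ≤ g)
    (hq : q.Monic) (hdeg : q.natDegree = g) (hirr : Irreducible q)
    (hcoeff : (2 * g : ℤ) < |q.coeff (g - 1)|) :
    SymplecticallyIrreducible (symPoly q) ∧
      (∃ ζ : ℂ, Polynomial.aeval ζ (symPoly q) = 0 ∧ ¬ ∃ n : ℕ, 1 ≤ n ∧ ζ ^ n = 1) ∧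
      ¬ ∃ k : ℕ, 1 < k ∧ ∃ r : Polynomial ℤ, symPoly q = r.comp (Polynomial.X ^ k) := by
  subst hdeg
  set g := q.natDegree with hgdef
  have hqne : q ≠ 0 := hq.ne_zero
  have hcg : q.coeff (g - 1) ≠ 0 := by
    intro h
    rw [h, abs_zero] at hcoeff
    have h0 : (0 : ℤ) ≤ 2 * (g : ℤ) := by positivity
    linarith
  have hsym : IsSymplecticPoly (symPoly q) :=
    ⟨symPoly_monic q hq, ⟨g, hg, symPoly_natDegree q hqne⟩, symPoly_palindromic q hqne⟩
  refine ⟨⟨hsym, ?_⟩, ?_, ?_⟩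
  · -- symplectic irreducibility
    rintro ⟨p₁, p₂, h₁, h₂, hprod⟩
    obtain ⟨n₁, hn₁, hd₁⟩ := h₁.2.1
    obtain ⟨n₂, hn₂, hd₂⟩ := h₂.2.1
    obtain ⟨r₁, hr₁m, hr₁d, hr₁⟩ := exists_symPoly p₁ h₁.1 n₁ hn₁ hd₁ h₁.2.2
    obtain ⟨r₂, hr₂m, hr₂d, hr₂⟩ := exists_symPoly p₂ h₂.1 n₂ hn₂ hd₂ h₂.2.2
    have hprod2 : symPoly q = symPoly (r₁ * r₂) := by
      rw [symPoly_mul r₁ r₂ hr₁m.ne_zero hr₂m.ne_zero, hr₁, hr₂, hprod]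
    have hqprod : q = r₁ * r₂ :=
      symPoly_injective hqne (mul_ne_zero hr₁m.ne_zero hr₂m.ne_zero) hprod2
    rcases hirr.isUnit_or_isUnit hqprod with h | h
    · have := natDegree_eq_zero_of_isUnit h
      omega
    · have := natDegree_eq_zero_of_isUnit h
      omega
  · -- root not a root of unity
    set Q := q.map (algebraMap ℤ ℂ) with hQ
    have hQm : Q.Monic := hq.map _
    have hQd : Q.natDegree = g := by
      rw [hQ, natDegree_map_eq_of_injective (algebraMap ℤ ℂ).injective_int]
    have hQs : Q.Splits := IsAlgClosed.splits Q
    have hsum := hQs.nextCoeff_eq_neg_sum_roots_of_monic hQm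
    have hnext : Q.nextCoeff = ((q.coeff (g - 1) : ℤ) : ℂ) := by
      rw [nextCoeff_of_natDegree_pos (by omega : 0 < Q.natDegree), hQd, hQ, coeff_map,
        algebraMap_int_eq, eq_intCast]
    have hex : ∃ α ∈ Q.roots, 2 < ‖α‖ := by
      by_contra hno
      push_neg at hno
      have hcard : Multiset.card Q.roots = g := by
        rw [← hQd]
        exact (splits_iff_card_roots.mp hQs)
      have hb : ‖Q.roots.sum‖ ≤ 2 * g := by
        calc ‖Q.roots.sum‖ ≤ ((Q.roots.map (fun x => ‖x‖)).sum) := by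
              simpa using norm_multiset_sum_le Q.roots
          _ ≤ (Multiset.card (Q.roots.map (fun x => ‖x‖))) • (2 : ℝ) :=
              Multiset.sum_le_card_nsmul _ _ (by
                intro x hx
                obtain ⟨a, ha, rfl⟩ := Multiset.mem_map.mp hx
                exact hno a ha)
          _ = 2 * g := by rw [Multiset.card_map, hcard]; push_cast; ring
      have habs : ‖(((q.coeff (g - 1) : ℤ) : ℂ))‖ ≤ 2 * g := by
        rw [← hnext, hsum, norm_neg]
        exact hb
      rw [Complex.norm_intCast] at habs
      have : (2 * g : ℝ) < |(q.coeff (g - 1) : ℝ)| := by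
        have := hcoeff
        push_cast at this ⊢
        exact_mod_cast this
      rw [← Int.cast_abs] at habs this
      linarith
    obtain ⟨α, hαroot, hα2⟩ := hex
    have hαq : Polynomial.aeval α q = 0 := by
      have hroot := (mem_roots'.mp hαroot).2
      rw [Polynomial.aeval_def, ← Polynomial.eval_map]
      exact hroot
    obtain ⟨ζ, hζroot⟩ := Complex.exists_root (f := X ^ 2 - C α * X + 1) (by
      have : (X ^ 2 - C α * X + 1 : ℂ[X]).degree = 2 := by compute_degree!
      rw [this]; norm_num)
    have hev : ζ ^ 2 - α * ζ + 1 = 0 := by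
      simpa using hζroot
    have hζ0 : ζ ≠ 0 := by
      rintro rfl
      simp at hev
    have hzz : ζ ^ 2 + 1 = α * ζ := by linear_combination hev
    refine ⟨ζ, ?_, ?_⟩
    · rw [symPoly_aeval_complex q ζ α hζ0 hzz, hαq, zero_mul]
    · rintro ⟨n, hn1, hζn⟩
      have habs1 : ‖ζ‖ = 1 := by
        have h1 : ‖ζ‖ ^ n = 1 := by rw [← norm_pow, hζn, norm_one]
        rcases lt_trichotomy ‖ζ‖ 1 with h | h | h
        · have := pow_lt_one₀ (norm_nonneg _) h (show n ≠ 0 by omega)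
          rw [h1] at this; linarith
        · exact h
        · have := one_lt_pow₀ h (show n ≠ 0 by omega)
          rw [h1] at this; linarith
      have hα : α = ζ + ζ⁻¹ := by
        field_simp
        linear_combination -hzz
      have : ‖α‖ ≤ 2 := by
        rw [hα]
        calc ‖ζ + ζ⁻¹‖ ≤ ‖ζ‖ + ‖ζ⁻¹‖ :=
              norm_add_le _ _
          _ = 2 := by rw [norm_inv, habs1]; norm_num
      linarith
  · -- not a polynomial in x^k
    rintro ⟨k, hk, r, hcomp⟩
    rw [← Polynomial.expand_eq_comp_X_pow] at hcomp
    have hk0 : 0 < k := by omega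
    have hdvd1 : k ∣ 2 * g := by
      by_contra hnd
      have h1 := congrArg (fun p => Polynomial.coeff p (2 * g)) hcomp
      rw [Polynomial.coeff_expand hk0, if_neg hnd, symPoly_coeff_top] at h1
      exact one_ne_zero (hq.leadingCoeff ▸ h1)
    have hdvd2 : k ∣ 2 * g - 1 := by
      by_contra hnd
      have h1 := congrArg (fun p => Polynomial.coeff p (2 * g - 1)) hcomp
      rw [Polynomial.coeff_expand hk0, if_neg hnd, symPoly_coeff_subtop q hg] at h1
      exact hcg h1
    have hone : k ∣ 1 := by
      have := Nat.dvd_sub hdvd1 hdvd2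
      rwa [show 2 * g - (2 * g - 1) = 1 from by omega] at this
    have := Nat.le_of_dvd one_pos hone
    omega
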